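/- arXiv:2402.19181 — 3 statements merged into one kernel-verified Lean document; each statement's English description precedes it below -/
import Mathlib

section
/- If M(s, τ₀) = 0 and M(s + π/4, τ₀) = 0 for some particular s and τ₀, then M(s', τ₀') = 0 for all s' and τ₀'. -/
open Real

theorem melnikov_identically_zero
    (M : ℝ → ℝ → ℝ)
    (hshift1 : ∀ s τ₀ τs : ℝ,
      M (s + τs) τ₀ = cos (2 * τs) * M s τ₀ + sin (2 * τs) * M (s + π / 4) τ₀)
    (hshift2 : ∀ s τ₀ τs : ℝ, M (s + τs) τ₀ = M s (τ₀ - τs))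
    (s τ₀ : ℝ) (h1 : M s τ₀ = 0) (h2 : M (s + π / 4) τ₀ = 0) :
    ∀ s' τ₀' : ℝ, M s' τ₀' = 0 := by
  have hall : ∀ x : ℝ, M x τ₀ = 0 := by
    intro x
    have := hshift1 s τ₀ (x - s)
    rw [h1, h2] at this
    simpa using this
  intro s' τ₀'
  have := hshift2 s' τ₀ (τ₀ - τ₀')
  rw [hall (s' + (τ₀ - τ₀'))] at this
  simpa using this.symm
end

section
/- Suppose J is T*-periodic and odd about the half-period point in the sense J(s + T* - τ) = -J(s + τ), K is T*-periodic and even in the sense K(s + T* - τ) = K(s + τ), L satisfies L(s + T* - τ) = -L(s + τ), and a·T* is an integer multiple of π. Then M(s, τ₀) = 2A·B where A = sin(2τ₀) if a = 1 and A = 0 if a ≥ 2 with sin(T*) ≠ 0, and B = ∫₀^{T*/2} (K(s+τ)cos(2τ) - J(s+τ)sin(2τ)) dτ. -/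
open Real MeasureTheory intervalIntegral

theorem melnikov_half_period_symmetry
    (T : ℝ) (hT : 0 < T) (a : ℕ) (ha : 0 < a)
    (hres : ∃ m : ℤ, (a : ℝ) * T = m * π)
    (J K L : ℝ → ℝ)
    (hJc : Continuous J) (hKc : Continuous K) (hLc : Continuous L)
    (hJper : ∀ u, J (u + T) = J u) (hKper : ∀ u, K (u + T) = K u)
    (hLper : ∀ u, L (u + T) = L u)
    (s : ℝ)
    (hJsym : ∀ τ, J (s + T - τ) = -J (s + τ))
    (hKsym : ∀ τ, K (s + T - τ) = K (s + τ))
    (hLsym : ∀ τ, L (s + T - τ) = -L (s + τ))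
    (M : ℝ → ℝ → ℝ)
    (hM : ∀ s' τ₀, M s' τ₀ = ∫ τ in (0:ℝ)..(a * T),
      (J (s' + τ) * cos (2 * (τ₀ + τ)) + K (s' + τ) * sin (2 * (τ₀ + τ)) + L (s' + τ)))
    (τ₀ : ℝ) :
    (a = 1 → M s τ₀ = 2 * sin (2 * τ₀) *
      ∫ τ in (0:ℝ)..(T / 2), (K (s + τ) * cos (2 * τ) - J (s + τ) * sin (2 * τ))) ∧
    (2 ≤ a → sin T ≠ 0 → M s τ₀ = 2 * 0 *
      ∫ τ in (0:ℝ)..(T / 2), (K (s + τ) * cos (2 * τ) - J (s + τ) * sin (2 * τ))) := by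
  obtain ⟨m, hm⟩ := hres
  have ha1 : 1 ≤ a := ha
  have hJP : Function.Periodic J T := hJper
  have hKP : Function.Periodic K T := hKper
  have hLP : Function.Periodic L T := hLper
  have hMs := hM s τ₀
  set c : ℝ := (a : ℝ) * T with hc
  have h2c : 2 * c = (m : ℝ) * (2 * π) := by rw [hm]; ring
  have hcs : ∀ x, cos (x + 2 * c) = cos x := by
    intro x
    rw [show x + 2 * c = x + (m : ℝ) * (2 * π) by rw [h2c], Real.cos_add_int_mul_two_pi]
  have hsn : ∀ x, sin (x + 2 * c) = sin x := by
    intro x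
    rw [show x + 2 * c = x + (m : ℝ) * (2 * π) by rw [h2c], Real.sin_add_int_mul_two_pi]
  have hJa : ∀ u, J (u + c) = J u := by
    intro u
    have := (hJP.nat_mul a) u
    rwa [← hc] at this
  have hKa : ∀ u, K (u + c) = K u := by
    intro u
    have := (hKP.nat_mul a) u
    rwa [← hc] at this
  have hcast : ((a - 1 : ℕ) : ℝ) * T = c - T := by
    rw [Nat.cast_sub ha1, hc]; push_cast; ring
  have hJs : ∀ τ, J (s + (c - τ)) = -J (s + τ) := by
    intro τ
    have h1 := (hJP.nat_mul (a - 1)) (s + T - τ)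
    rw [hcast] at h1
    rw [show s + (c - τ) = s + T - τ + (c - T) by ring, h1, hJsym]
  have hKs : ∀ τ, K (s + (c - τ)) = K (s + τ) := by
    intro τ
    have h1 := (hKP.nat_mul (a - 1)) (s + T - τ)
    rw [hcast] at h1
    rw [show s + (c - τ) = s + T - τ + (c - T) by ring, h1, hKsym]
  have hLs : ∀ τ, L (s + (c - τ)) = -L (s + τ) := by
    intro τ
    have h1 := (hLP.nat_mul (a - 1)) (s + T - τ)
    rw [hcast] at h1
    rw [show s + (c - τ) = s + T - τ + (c - T) by ring, h1, hLsym]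
  set f : ℝ → ℝ := fun τ =>
    J (s + τ) * cos (2 * (τ₀ + τ)) + K (s + τ) * sin (2 * (τ₀ + τ)) + L (s + τ) with hf
  set g : ℝ → ℝ := fun τ => K (s + τ) * cos (2 * τ) - J (s + τ) * sin (2 * τ) with hg
  have hfc : Continuous f := by rw [hf]; fun_prop
  have hgc : Continuous g := by rw [hg]; fun_prop
  have hpt : ∀ τ, f τ + f (c - τ) = 2 * sin (2 * τ₀) * g τ := by
    intro τ
    simp only [hf, hg]
    rw [hJs τ, hKs τ, hLs τ,
      show 2 * (τ₀ + (c - τ)) = (2 * τ₀ - 2 * τ) + 2 * c by ring,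
      hcs, hsn,
      show 2 * (τ₀ + τ) = 2 * τ₀ + 2 * τ by ring,
      Real.cos_add, Real.sin_add, Real.cos_sub, Real.sin_sub]
    ring
  have hstep1 : M s τ₀ = sin (2 * τ₀) * ∫ τ in (0:ℝ)..c, g τ := by
    have hA : (∫ τ in (0:ℝ)..c, f (c - τ)) = ∫ τ in (0:ℝ)..c, f τ := by
      rw [intervalIntegral.integral_comp_sub_left f c]
      congr 1 <;> ring
    have hB : (∫ τ in (0:ℝ)..c, f τ) + ∫ τ in (0:ℝ)..c, f (c - τ)
        = ∫ τ in (0:ℝ)..c, (f τ + f (c - τ)) :=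
      (intervalIntegral.integral_add (hfc.intervalIntegrable _ _)
        ((hfc.comp (continuous_const.sub continuous_id)).intervalIntegrable _ _)).symm
    have hC : (∫ τ in (0:ℝ)..c, (f τ + f (c - τ)))
        = 2 * sin (2 * τ₀) * ∫ τ in (0:ℝ)..c, g τ := by
      simp only [hpt]
      exact intervalIntegral.integral_const_mul _ _
    rw [hMs]
    linarith [hA, hB, hC]
  constructor
  · -- case a = 1
    intro h1
    subst h1
    have hcT : c = T := by rw [hc]; norm_num
    have hgsym : ∀ τ, g (T - τ) = g τ := by
      intro τ
      simp only [hg]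
      rw [show s + (T - τ) = s + T - τ by ring, hJsym, hKsym,
        show 2 * (T - τ) = -(2 * τ) + 2 * c by rw [hcT]; ring,
        hcs, hsn, Real.cos_neg, Real.sin_neg]
      ring
    have hi1 : IntervalIntegrable g volume 0 (T / 2) := hgc.intervalIntegrable _ _
    have hi2 : IntervalIntegrable g volume (T / 2) T := hgc.intervalIntegrable _ _
    have hsplit := intervalIntegral.integral_add_adjacent_intervals hi1 hi2
    have hhalf : (∫ τ in (0:ℝ)..(T / 2), g (T - τ)) = ∫ τ in (T / 2)..T, g τ := by
      rw [intervalIntegral.integral_comp_sub_left g T]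
      congr 1 <;> ring
    have h2 : (∫ τ in (0:ℝ)..(T / 2), g (T - τ)) = ∫ τ in (0:ℝ)..(T / 2), g τ := by
      simp only [hgsym]
    have hX : (∫ τ in (0:ℝ)..c, g τ) = 2 * ∫ τ in (0:ℝ)..(T / 2), g τ := by
      rw [hcT]
      linarith [hsplit, hhalf, h2]
    rw [hstep1, hX]
    ring
  · -- case 2 ≤ a
    intro h2a hsT
    set h : ℝ → ℝ := fun τ => -(K (s + τ) * sin (2 * τ)) - J (s + τ) * cos (2 * τ) with hh
    have hhc : Continuous h := by rw [hh]; fun_prop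
    have hGper : Function.Periodic g c := by
      intro τ
      simp only [hg]
      rw [show s + (τ + c) = s + τ + c by ring, hKa, hJa,
        show 2 * (τ + c) = 2 * τ + 2 * c by ring, hcs, hsn]
    have hHper : Function.Periodic h c := by
      intro τ
      simp only [hh]
      rw [show s + (τ + c) = s + τ + c by ring, hKa, hJa,
        show 2 * (τ + c) = 2 * τ + 2 * c by ring, hcs, hsn]
    have htrans : ∀ φ : ℝ → ℝ, Function.Periodic φ c →
        (∫ τ in (0:ℝ)..c, φ (τ + T)) = ∫ τ in (0:ℝ)..c, φ τ := by
      intro φ hφ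
      rw [intervalIntegral.integral_comp_add_right φ T]
      have h0 := hφ.intervalIntegral_add_eq T 0
      rw [zero_add] at h0
      rw [show (0:ℝ) + T = T by ring, show c + T = T + c by ring]
      exact h0
    have hgT : ∀ τ, g (τ + T) = cos (2 * T) * g τ + sin (2 * T) * h τ := by
      intro τ
      simp only [hg, hh]
      rw [show s + (τ + T) = s + τ + T by ring, hKper, hJper,
        show 2 * (τ + T) = 2 * τ + 2 * T by ring, Real.cos_add, Real.sin_add]
      ring
    have hhT : ∀ τ, h (τ + T) = cos (2 * T) * h τ - sin (2 * T) * g τ := by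
      intro τ
      simp only [hg, hh]
      rw [show s + (τ + T) = s + τ + T by ring, hKper, hJper,
        show 2 * (τ + T) = 2 * τ + 2 * T by ring, Real.cos_add, Real.sin_add]
      ring
    have e1 : (∫ τ in (0:ℝ)..c, g τ)
        = cos (2 * T) * (∫ τ in (0:ℝ)..c, g τ) + sin (2 * T) * ∫ τ in (0:ℝ)..c, h τ := by
      conv_lhs => rw [← htrans g hGper]
      simp only [hgT]
      rw [intervalIntegral.integral_add (f := fun τ => cos (2 * T) * g τ) (g := fun τ => sin (2 * T) * h τ) ((continuous_const.mul hgc).intervalIntegrable _ _)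
        ((continuous_const.mul hhc).intervalIntegrable _ _),
        intervalIntegral.integral_const_mul, intervalIntegral.integral_const_mul]
    have e2 : (∫ τ in (0:ℝ)..c, h τ)
        = cos (2 * T) * (∫ τ in (0:ℝ)..c, h τ) - sin (2 * T) * ∫ τ in (0:ℝ)..c, g τ := by
      conv_lhs => rw [← htrans h hHper]
      simp only [hhT]
      rw [intervalIntegral.integral_sub (f := fun τ => cos (2 * T) * h τ) (g := fun τ => sin (2 * T) * g τ) ((continuous_const.mul hhc).intervalIntegrable _ _)
        ((continuous_const.mul hgc).intervalIntegrable _ _),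
        intervalIntegral.integral_const_mul, intervalIntegral.integral_const_mul]
    have hkey : ((1 - cos (2 * T)) ^ 2 + sin (2 * T) ^ 2) * (∫ τ in (0:ℝ)..c, g τ) = 0 := by
      linear_combination (1 - Real.cos (2 * T)) * e1 + Real.sin (2 * T) * e2
    have hid : (1 - cos (2 * T)) ^ 2 + sin (2 * T) ^ 2 = 4 * sin T ^ 2 := by
      rw [Real.cos_two_mul, Real.sin_two_mul]
      linear_combination (4 * Real.cos T ^ 2 - 4) * Real.sin_sq_add_cos_sq T
    have hSz : (∫ τ in (0:ℝ)..c, g τ) = 0 := by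
      rcases mul_eq_zero.mp hkey with h0 | h0
      · exfalso
        rw [hid] at h0
        have h4 : Real.sin T ^ 2 = 0 := by linarith
        exact hsT (by nlinarith [sq_nonneg (Real.sin T)])
      · exact h0
    rw [hstep1, hSz]
    ring
end

section
/- Let M(s, τ₀) = ∫₀^{aT*} (J(s+τ)cos(2(τ₀+τ)) + K(s+τ)sin(2(τ₀+τ))) dτ with J, K continuous and T*-periodic, a ≥ 2, a·T* = mπ for an integer m, and sin(T*) ≠ 0, and suppose there exists s₀ satisfying the half-period symmetries J(s₀ + T* - τ) = -J(s₀ + τ) and K(s₀ + T* - τ) = K(s₀ + τ) for all τ. Then M(s, τ₀) = 0 identically for all s and τ₀. -/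
open Real MeasureTheory intervalIntegral

theorem melnikov_vanishes_identically_for_a_ge_two
    (T : ℝ) (hT : 0 < T) (a : ℕ) (ha : 2 ≤ a)
    (hres : ∃ m : ℤ, (a : ℝ) * T = m * π) (hsin : sin T ≠ 0)
    (J K : ℝ → ℝ) (hJc : Continuous J) (hKc : Continuous K)
    (hJper : ∀ u, J (u + T) = J u) (hKper : ∀ u, K (u + T) = K u)
    (s₀ : ℝ)
    (hJsym : ∀ τ, J (s₀ + T - τ) = -J (s₀ + τ))
    (hKsym : ∀ τ, K (s₀ + T - τ) = K (s₀ + τ))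
    (M : ℝ → ℝ → ℝ)
    (hM : ∀ s τ₀, M s τ₀ = ∫ τ in (0:ℝ)..(a * T),
      (J (s + τ) * cos (2 * (τ₀ + τ)) + K (s + τ) * sin (2 * (τ₀ + τ)))) :
    ∀ s τ₀ : ℝ, M s τ₀ = 0 := by
  intro s τ₀
  obtain ⟨m, hm⟩ := hres
  -- decomposition M s σ = cos(2σ) A + sin(2σ) B
  set A := ∫ τ in (0:ℝ)..(a*T), (J (s+τ) * Real.cos (2*τ) + K (s+τ) * Real.sin (2*τ)) with hA
  set B := ∫ τ in (0:ℝ)..(a*T), (K (s+τ) * Real.cos (2*τ) - J (s+τ) * Real.sin (2*τ)) with hB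
  have hcont1 : Continuous fun τ => J (s+τ) * Real.cos (2*τ) + K (s+τ) * Real.sin (2*τ) := by
    fun_prop
  have hcont2 : Continuous fun τ => K (s+τ) * Real.cos (2*τ) - J (s+τ) * Real.sin (2*τ) := by
    fun_prop
  have hdecomp : ∀ σ : ℝ, M s σ = Real.cos (2*σ) * A + Real.sin (2*σ) * B := by
    intro σ
    rw [hM]
    have hpt : ∀ τ : ℝ, J (s+τ) * Real.cos (2*(σ+τ)) + K (s+τ) * Real.sin (2*(σ+τ))
        = Real.cos (2*σ) * (J (s+τ) * Real.cos (2*τ) + K (s+τ) * Real.sin (2*τ))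
        + Real.sin (2*σ) * (K (s+τ) * Real.cos (2*τ) - J (s+τ) * Real.sin (2*τ)) := by
      intro τ
      have h1 : 2*(σ+τ) = 2*σ + 2*τ := by ring
      rw [h1, Real.cos_add, Real.sin_add]; ring
    simp_rw [hpt]
    rw [intervalIntegral.integral_add (f := fun τ => Real.cos (2*σ) * (J (s+τ) * Real.cos (2*τ) + K (s+τ) * Real.sin (2*τ)))
        (g := fun τ => Real.sin (2*σ) * (K (s+τ) * Real.cos (2*τ) - J (s+τ) * Real.sin (2*τ)))
        ((continuous_const.mul hcont1).intervalIntegrable _ _)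
        ((continuous_const.mul hcont2).intervalIntegrable _ _),
      intervalIntegral.integral_const_mul, intervalIntegral.integral_const_mul]
  -- periodicity of J, K with period a*T
  have hJP : Function.Periodic J T := hJper
  have hKP : Function.Periodic K T := hKper
  have hJa : ∀ u, J (u + (a:ℝ)*T) = J u := hJP.nat_mul a
  have hKa : ∀ u, K (u + (a:ℝ)*T) = K u := hKP.nat_mul a
  -- invariance: M s (σ + T) = M s σ
  have hper : ∀ σ : ℝ, M s (σ + T) = M s σ := by
    intro σ
    set g : ℝ → ℝ := fun τ => J (s+τ) * Real.cos (2*(σ+τ)) + K (s+τ) * Real.sin (2*(σ+τ)) with hg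
    have hgper : Function.Periodic g ((a:ℝ)*T) := by
      intro τ
      have h1 : s + (τ + (a:ℝ)*T) = (s + τ) + (a:ℝ)*T := by ring
      have h2 : 2*(σ + (τ + (a:ℝ)*T)) = 2*(σ+τ) + m*(2*π) := by linear_combination 2*hm
      simp only [hg, h1, h2, hJa, hKa, Real.cos_add_int_mul_two_pi, Real.sin_add_int_mul_two_pi]
    have hshift : M s (σ + T) = ∫ τ in (0:ℝ)..((a:ℝ)*T), g (τ + T) := by
      rw [hM]
      congr 1
      funext τ
      have h1 : s + (τ + T) = (s + τ) + T := by ring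
      have h2 : σ + (τ + T) = (σ + T) + τ := by ring
      simp only [hg, h1, h2, hJper, hKper]
    rw [hshift, intervalIntegral.integral_comp_add_right g T]
    have := hgper.intervalIntegral_add_eq T 0
    rw [zero_add] at this
    rw [show (0:ℝ) + T = T by ring] at *
    calc ∫ x in T..(a:ℝ)*T + T, g x = ∫ x in T..T + (a:ℝ)*T, g x := by rw [add_comm ((a:ℝ)*T) T]
      _ = ∫ x in (0:ℝ)..(a:ℝ)*T, g x := this
      _ = M s σ := by rw [hM]
  -- extract the two linear equations
  have e0 : Real.cos (2*T) * A + Real.sin (2*T) * B = A := by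
    have h := hper 0
    rw [hdecomp, hdecomp] at h
    norm_num at h
    convert h using 2 <;> ring_nf
  have e1 : -Real.sin (2*T) * A + Real.cos (2*T) * B = B := by
    have h := hper (π/4)
    rw [hdecomp, hdecomp] at h
    have h14 : 2*(π/4 + T) = π/2 + 2*T := by ring
    have h15 : 2*(π/4) = π/2 := by ring
    rw [h14, h15, Real.cos_add, Real.sin_add, Real.cos_pi_div_two, Real.sin_pi_div_two] at h
    linarith [h]
  -- solve for A and B
  rw [Real.cos_two_mul, Real.sin_two_mul] at e0 e1
  have hpy := Real.sin_sq_add_cos_sq T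
  have h4A : 4 * Real.sin T ^ 2 * A = 0 := by
    linear_combination (2*Real.cos T^2 - 2) * e0 - 2*Real.sin T*Real.cos T * e1
      + 4*A*(1 - Real.cos T^2) * hpy
  have h4B : 4 * Real.sin T ^ 2 * B = 0 := by
    linear_combination 2*Real.sin T*Real.cos T * e0 + (2*Real.cos T^2 - 2) * e1
      + 4*B*(1 - Real.cos T^2) * hpy
  have hA0 : A = 0 := by
    simp [mul_eq_zero, pow_eq_zero_iff, hsin] at h4A
    exact h4A
  have hB0 : B = 0 := by
    simp [mul_eq_zero, pow_eq_zero_iff, hsin] at h4B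
    exact h4B
  rw [hdecomp, hA0, hB0]; ring
end
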